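/- Let w be the eigenvector of Ω^{-1/2} Σ Ω^{-1/2} associated with its smallest eigenvalue (Ω positive definite, Σ symmetric positive semidefinite), and set γ = Ω^{-1/2} w. If Σ = Λ + c Ω with c > 0 and Λ positive semidefinite and singular with one-dimensional kernel, then γ spans the kernel of Λ; consequently if the kernel of Λ is spanned by [1, −β^T]^T, the ratio −γ_S/γ_Y equals β. -/

import Mathlib

open Matrix
open scoped MatrixOrder

/-- Correctness of the LIMLK/TLS procedure: if `Σ = Λ + cΩ` with `c > 0`, `Λ` PSD with
one-dimensional kernel, and `w` is the smallest eigenvector of `Ω^{-1/2} Σ Ω^{-1/2}`, then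
`γ = Ω^{-1/2} w` spans the kernel of `Λ`; if moreover the kernel of `Λ` is spanned by
`[1, -βᵀ]ᵀ`, then `-γ_S/γ_Y = β`. -/
theorem stmt19 (m : ℕ) (Ω Sig Λ : Matrix (Unit ⊕ Fin m) (Unit ⊕ Fin m) ℝ) (c : ℝ)
    (hΩ : Ω.PosDef) (hSig : Sig.PosSemidef) (hΛ : Λ.PosSemidef) (hc : 0 < c)
    (hdecomp : Sig = Λ + c • Ω)
    (hker1dim : ∃ u : Unit ⊕ Fin m → ℝ, u ≠ 0 ∧ Λ.mulVec u = 0 ∧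
      ∀ u' : Unit ⊕ Fin m → ℝ, Λ.mulVec u' = 0 → ∃ a : ℝ, u' = a • u)
    (R : Matrix (Unit ⊕ Fin m) (Unit ⊕ Fin m) ℝ) (hR : R = (CFC.sqrt Ω)⁻¹)
    (κ : ℝ) (w : Unit ⊕ Fin m → ℝ) (hw : w ≠ 0)
    (heig : (R * Sig * R).mulVec w = κ • w)
    (hmin : ∀ (κ' : ℝ) (w' : Unit ⊕ Fin m → ℝ), w' ≠ 0 →
      (R * Sig * R).mulVec w' = κ' • w' → κ ≤ κ')
    (γ : Unit ⊕ Fin m → ℝ) (hγ : γ = R.mulVec w) :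
    (Λ.mulVec γ = 0 ∧ γ ≠ 0 ∧
      ∀ u : Unit ⊕ Fin m → ℝ, Λ.mulVec u = 0 → ∃ a : ℝ, u = a • γ) ∧
    (∀ β : Fin m → ℝ,
      (∀ u : Unit ⊕ Fin m → ℝ, Λ.mulVec u = 0 ↔
        ∃ a : ℝ, u = a • (Sum.elim (fun _ => (1 : ℝ)) fun i => -β i)) →
      ∀ i, -(γ (Sum.inr i)) / γ (Sum.inl ()) = β i) := by
  classical
  set S := CFC.sqrt Ω with hSdef
  have hSS : S * S = Ω := CFC.sqrt_mul_sqrt_self Ω hΩ.posSemidef.nonneg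
  have hdet : IsUnit S.det := by
    have h : S.det * S.det = Ω.det := by rw [← det_mul, hSS]
    have hΩdet : Ω.det ≠ 0 := ne_of_gt hΩ.det_pos
    exact isUnit_iff_ne_zero.mpr (fun h0 => hΩdet (by rw [← h, h0, zero_mul]))
  have hRS : R * S = 1 := by rw [hR]; exact nonsing_inv_mul S hdet
  have hSR : S * R = 1 := by rw [hR]; exact mul_nonsing_inv S hdet
  have hSherm : S.IsHermitian := (CFC.sqrt_nonneg Ω).posSemidef.1
  have hRherm : R.IsHermitian := by rw [hR]; exact hSherm.inv
  -- R * Ω * R = 1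
  have hRΩR : R * Ω * R = 1 := by
    rw [← hSS, show R * (S * S) * R = (R * S) * (S * R) by simp only [Matrix.mul_assoc], hRS, hSR, one_mul]
  have hM : R * Sig * R = R * Λ * R + c • (1 : Matrix _ _ ℝ) := by
    rw [hdecomp]
    rw [show R * (Λ + c • Ω) * R = R * Λ * R + c • (R * Ω * R) by
      simp [Matrix.mul_add, Matrix.add_mul, Matrix.mul_smul, Matrix.smul_mul]]
    rw [hRΩR]
  -- eigen equation for R Λ R
  have heig' : (R * Λ * R).mulVec w = (κ - c) • w := by
    have := heig
    rw [hM, Matrix.add_mulVec, Matrix.smul_mulVec, Matrix.one_mulVec] at this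
    have : (R * Λ * R).mulVec w = κ • w - c • w := by
      rw [← this]; abel
    rw [this, sub_smul]
  -- R Λ R is PSD
  have hRΛR : (R * Λ * R).PosSemidef := by
    have := hΛ.conjTranspose_mul_mul_same R
    rwa [hRherm.eq] at this
  -- κ ≥ c
  have hge : c ≤ κ := by
    have h1 : 0 ≤ w ⬝ᵥ (R * Λ * R).mulVec w := by
      have := hRΛR.dotProduct_mulVec_nonneg w
      simpa using this
    rw [heig'] at h1
    have h2 : w ⬝ᵥ (κ - c) • w = (κ - c) * (w ⬝ᵥ w) := by
      simp [dotProduct_smul, smul_eq_mul]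
    rw [h2] at h1
    have hnn : 0 ≤ w ⬝ᵥ w := Finset.sum_nonneg fun i _ => mul_self_nonneg _
    have h3 : 0 < w ⬝ᵥ w := by
      rcases lt_or_eq_of_le hnn with h | h
      · exact h
      · exact absurd ((dotProduct_self_eq_zero).mp h.symm) hw
    nlinarith
  -- κ ≤ c using the kernel vector
  obtain ⟨u₀, hu₀ne, hu₀ker, hu₀span⟩ := hker1dim
  have hle : κ ≤ c := by
    have hw'ne : S.mulVec u₀ ≠ 0 := by
      intro h0
      apply hu₀ne
      have : R.mulVec (S.mulVec u₀) = u₀ := by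
        rw [mulVec_mulVec, hRS, one_mulVec]
      rw [h0, mulVec_zero] at this
      exact this.symm
    refine hmin c (S.mulVec u₀) hw'ne ?_
    rw [hM, Matrix.add_mulVec, Matrix.smul_mulVec, Matrix.one_mulVec]
    have h1 : (R * Λ * R).mulVec (S.mulVec u₀) = 0 := by
      rw [mulVec_mulVec, show R * Λ * R * S = R * Λ * (R * S) by simp only [Matrix.mul_assoc], hRS, Matrix.mul_one,
        ← mulVec_mulVec, hu₀ker, mulVec_zero]
    rw [h1, zero_add]
  have hκ : κ = c := le_antisymm hle hge
  -- hence R Λ R w = 0, so Λ γ = 0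
  have hRΛRw : (R * Λ * R).mulVec w = 0 := by
    rw [heig', hκ, sub_self, zero_smul]
  have hΛγ : Λ.mulVec γ = 0 := by
    have h1 : R.mulVec (Λ.mulVec γ) = 0 := by
      rw [hγ, mulVec_mulVec, mulVec_mulVec]
      exact hRΛRw
    have h2 : S.mulVec (R.mulVec (Λ.mulVec γ)) = Λ.mulVec γ := by
      rw [mulVec_mulVec, hSR, one_mulVec]
    rw [h1, mulVec_zero] at h2
    exact h2.symm
  have hγne : γ ≠ 0 := by
    intro h0
    apply hw
    have : S.mulVec γ = w := by rw [hγ, mulVec_mulVec, hSR, one_mulVec]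
    rw [h0, mulVec_zero] at this
    exact this.symm
  refine ⟨⟨hΛγ, hγne, ?_⟩, ?_⟩
  · -- spanning
    intro u hu
    obtain ⟨a, ha⟩ := hu₀span u hu
    obtain ⟨a₀, ha₀⟩ := hu₀span γ hΛγ
    have ha₀ne : a₀ ≠ 0 := by
      intro h0; apply hγne; rw [ha₀, h0, zero_smul]
    refine ⟨a / a₀, ?_⟩
    rw [ha, ha₀, smul_smul, div_mul_cancel₀ a ha₀ne]
  · intro β hβ i
    obtain ⟨a, ha⟩ := (hβ γ).mp hΛγ
    have hane : a ≠ 0 := by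
      intro h0; apply hγne; rw [ha, h0, zero_smul]
    have h1 : γ (Sum.inl ()) = a := by rw [ha]; simp
    have h2 : γ (Sum.inr i) = a * (-β i) := by rw [ha]; simp
    rw [h1, h2]
    field_simp
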